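/- Let $\tilde K(x,y) = \chi_{[2,3]}(y)\, K_2(x - y - 1)$ with $K_2(t) = t^{-1/2}(\log(e/t))^{-(1+\beta)/2}\chi_{(0,1)}(t)$, $\beta > 0$, and let $s_0 > 2$. Then there exist an interval $Q \subset \mathbb{R}$ and points $x, y \in \frac12 Q$ such that $\big\| [\tilde K(\cdot, x) - \tilde K(\cdot, y)] \chi_{2Q \setminus Q} \big\|_{L^{s_0}(\mathbb{R})} = \infty$. Concretely, this holds for $Q = [0,4]$, any $x \in [1,2)$, and $y = 3$. -/

import Mathlib

open MeasureTheory Set ENNReal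

/-- The kernel `K₂(t) = t^{-1/2} (log(e/t))^{-(1+β)/2} χ_{(0,1)}(t)`. -/
noncomputable def K2 (β : ℝ) (t : ℝ) : ℝ :=
  Set.indicator (Set.Ioo 0 1)
    (fun t => t ^ (-(1:ℝ)/2) * (Real.log (Real.exp 1 / t)) ^ (-(1+β)/2)) t

/-- The kernel `K̃(x,y) = χ_{[2,3]}(y) K₂(x-y-1)`. -/
noncomputable def Ktil (β : ℝ) (x y : ℝ) : ℝ :=
  Set.indicator (Set.Icc 2 3) (fun _ => (1:ℝ)) y * K2 β (x - y - 1)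

lemma aux_lint_top {p : ℝ} (hp : 1 ≤ p) :
    ∫⁻ t in Ioo (0:ℝ) 1, ENNReal.ofReal (t ^ (-p)) = ⊤ := by
  by_contra h
  have hmeas : Measurable fun t : ℝ => t ^ (-p) := by fun_prop
  have hint : IntegrableOn (fun t : ℝ => t ^ (-p)) (Ioo 0 1) := by
    refine ⟨hmeas.aestronglyMeasurable.restrict, ?_⟩
    rw [hasFiniteIntegral_iff_ofReal ?_]
    · exact lt_top_iff_ne_top.mpr h
    · filter_upwards [ae_restrict_mem measurableSet_Ioo] with t ht
      exact Real.rpow_nonneg ht.1.le _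
  have := (intervalIntegral.integrableOn_Ioo_rpow_iff one_pos).mp hint
  linarith

lemma aux_lint_shift {p : ℝ} (hp : 1 ≤ p) :
    ∫⁻ z in Ioo (4:ℝ) 5, ENNReal.ofReal ((z - 4) ^ (-p)) = ⊤ := by
  have hmp : MeasurePreserving (fun t : ℝ => t + 4) volume volume :=
    measurePreserving_add_right volume 4
  have hf : Measurable fun z : ℝ => ENNReal.ofReal ((z - 4) ^ (-p)) := by fun_prop
  have := hmp.setLIntegral_comp_preimage (s := Ioo (4:ℝ) 5) measurableSet_Ioo hf
  have hpre : (fun t : ℝ => t + 4) ⁻¹' Ioo (4:ℝ) 5 = Ioo (0:ℝ) 1 := by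
    ext t; simp [Set.mem_Ioo]; intro _; norm_num
  rw [hpre] at this
  rw [← this]
  simp only [add_sub_cancel_right]
  exact aux_lint_top hp

lemma K2_lower {β : ℝ} (hβ : 0 < β) {ε : ℝ} (hε : 0 < ε) {t : ℝ} (ht : t ∈ Ioo (0:ℝ) 1) :
    (1+ε⁻¹) ^ (-(1+β)/2) * t ^ (-(1:ℝ)/2 + ε*(1+β)/2) ≤ K2 β t := by
  obtain ⟨ht0, ht1⟩ := ht
  rw [K2, Set.indicator_of_mem (by exact ⟨ht0, ht1⟩)]
  set L := Real.log (Real.exp 1 / t) with hLdef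
  have hlogt : Real.log t < 0 := Real.log_neg ht0 ht1
  have hL : L = 1 - Real.log t := by
    rw [hLdef, Real.log_div (Real.exp_ne_zero 1) ht0.ne', Real.log_exp]
  have hL0 : 0 < L := by rw [hL]; linarith
  have hone : (1:ℝ) ≤ t ^ (-ε) :=
    Real.one_le_rpow_of_pos_of_le_one_of_nonpos ht0 ht1.le (by linarith)
  have hlogb : -Real.log t ≤ ε⁻¹ * t ^ (-ε) := by
    have h1 : Real.log (t ^ (-ε)) ≤ t ^ (-ε) := by
      have := Real.log_le_sub_one_of_pos (Real.rpow_pos_of_pos ht0 (-ε))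
      linarith
    rw [Real.log_rpow ht0] at h1
    have h2 : -Real.log t = ε⁻¹ * (-ε * Real.log t) := by
      field_simp
    rw [h2]
    exact mul_le_mul_of_nonneg_left h1 (by positivity)
  have hLe : L ≤ (1+ε⁻¹) * t ^ (-ε) := by
    rw [hL]
    have h3 : (1+ε⁻¹) * t ^ (-ε) = t ^ (-ε) + ε⁻¹ * t ^ (-ε) := by ring
    rw [h3]; linarith
  have hexp : (-(1+β)/2 : ℝ) ≤ 0 := by linarith
  have key : ((1+ε⁻¹) * t ^ (-ε)) ^ (-(1+β)/2) ≤ L ^ (-(1+β)/2) :=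
    Real.rpow_le_rpow_of_nonpos hL0 hLe hexp
  have hsplit : ((1+ε⁻¹) * t ^ (-ε)) ^ (-(1+β)/2)
      = (1+ε⁻¹) ^ (-(1+β)/2) * t ^ (ε*(1+β)/2) := by
    rw [Real.mul_rpow (by positivity) (by positivity), ← Real.rpow_mul ht0.le]
    congr 2; ring
  calc (1+ε⁻¹) ^ (-(1+β)/2) * t ^ (-(1:ℝ)/2 + ε*(1+β)/2)
      = t ^ (-(1:ℝ)/2) * ((1+ε⁻¹) ^ (-(1+β)/2) * t ^ (ε*(1+β)/2)) := by
        rw [Real.rpow_add ht0]; ring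
    _ ≤ t ^ (-(1:ℝ)/2) * L ^ (-(1+β)/2) := by
        apply mul_le_mul_of_nonneg_left _ (by positivity)
        rw [← hsplit]; exact key

/-- For `s₀ > 2`, the kernel `K̃` fails the `L^{s₀}`-Hörmander-2 condition:
for `Q = [0,4]` (so `½Q = [1,3]` and `2Q \ Q = [-2,6] \ [0,4]`), any `x ∈ [1,2)`
and `y = 3`, the `L^{s₀}` norm of `[K̃(·,x) - K̃(·,y)] χ_{2Q \ Q}` is infinite. -/
theorem stmt11 (β : ℝ) (hβ : 0 < β) (s0 : ℝ) (hs0 : 2 < s0)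
    (x : ℝ) (hx : x ∈ Set.Ico (1:ℝ) 2) :
    eLpNorm (Set.indicator (Set.Icc (-2:ℝ) 6 \ Set.Icc 0 4)
        (fun z => Ktil β z x - Ktil β z 3)) (ENNReal.ofReal s0) volume = ⊤ := by
  have hs0' : (0:ℝ) < s0 := by linarith
  set f : ℝ → ℝ := Set.indicator (Set.Icc (-2:ℝ) 6 \ Set.Icc 0 4)
      (fun z => Ktil β z x - Ktil β z 3) with hfdef
  -- parameters
  set ε : ℝ := (1/2 - 1/s0)/(1+β) with hεdef
  have hε : 0 < ε := by
    apply div_pos _ (by linarith)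
    have : 1/s0 < 1/2 := by
      rw [div_lt_div_iff₀ hs0' (by norm_num)]; linarith
    linarith
  set c : ℝ := (1+ε⁻¹) ^ (-(1+β)/2) with hcdef
  have hc : 0 < c := Real.rpow_pos_of_pos (by positivity) _
  set δ : ℝ := 1/4 + 1/(2*s0) with hδdef
  have hexp_eq : -(1:ℝ)/2 + ε*(1+β)/2 = -δ := by
    rw [hεdef, hδdef]
    field_simp
    ring
  set q : ℝ := δ * s0 with hqdef
  have hq : 1 ≤ q := by
    rw [hqdef, hδdef]
    have : (1/4 + 1/(2*s0)) * s0 = s0/4 + 1/2 := by field_simp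
    rw [this]; linarith
  -- pointwise lower bound on (4,5)
  have hpt : ∀ z ∈ Ioo (4:ℝ) 5,
      ENNReal.ofReal (c ^ s0 * (z - 4) ^ (-q)) ≤ (‖f z‖₊ : ℝ≥0∞) ^ s0 := by
    intro z hz
    have hz01 : z - 4 ∈ Ioo (0:ℝ) 1 := ⟨by linarith [hz.1], by linarith [hz.2]⟩
    have hlow : c * (z - 4) ^ (-δ) ≤ K2 β (z - 4) := by
      have := K2_lower hβ hε hz01
      rwa [hexp_eq] at this
    have hfz : f z = -(K2 β (z - 4)) := by
      rw [hfdef, Set.indicator_of_mem]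
      · have h1 : Ktil β z x = 0 := by
          rw [Ktil, Set.indicator_of_notMem, zero_mul]
          intro hmem; exact absurd hmem.1 (by linarith [hx.2])
        have h2 : Ktil β z 3 = K2 β (z - 4) := by
          rw [Ktil, Set.indicator_of_mem (by norm_num), one_mul]
          congr 1; ring
        rw [h1, h2]; ring
      · constructor
        · exact ⟨by linarith [hz.1], by linarith [hz.2]⟩
        · intro hmem; linarith [hmem.2, hz.1]
    have hnorm : (‖f z‖₊ : ℝ≥0∞) = ENNReal.ofReal (K2 β (z - 4)) := by
      rw [← enorm_eq_nnnorm, Real.enorm_eq_ofReal_abs, hfz, abs_neg, abs_of_nonneg]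
      have := Real.rpow_pos_of_pos hz01.1 (-δ)
      nlinarith
    rw [hnorm]
    calc ENNReal.ofReal (c ^ s0 * (z - 4) ^ (-q))
        = ENNReal.ofReal ((c * (z - 4) ^ (-δ)) ^ s0) := by
          congr 1
          rw [Real.mul_rpow hc.le (Real.rpow_nonneg hz01.1.le _),
            ← Real.rpow_mul hz01.1.le]
          congr 2
          rw [hqdef]; ring
      _ = (ENNReal.ofReal (c * (z - 4) ^ (-δ))) ^ s0 :=
          (ENNReal.ofReal_rpow_of_nonneg
            (mul_nonneg hc.le (Real.rpow_nonneg hz01.1.le _)) hs0'.le).symm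
      _ ≤ (ENNReal.ofReal (K2 β (z - 4))) ^ s0 :=
          ENNReal.rpow_le_rpow (ENNReal.ofReal_le_ofReal hlow) hs0'.le
  -- the lower integral is infinite
  have hI : ∫⁻ z in Ioo (4:ℝ) 5, ENNReal.ofReal (c ^ s0 * (z - 4) ^ (-q)) = ⊤ := by
    simp_rw [ENNReal.ofReal_mul (by positivity : (0:ℝ) ≤ c ^ s0)]
    rw [lintegral_const_mul' _ _ ENNReal.ofReal_ne_top, aux_lint_shift hq,
      ENNReal.mul_top]
    exact (ENNReal.ofReal_pos.mpr (by positivity)).ne'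
  -- conclude
  have hp0 : (ENNReal.ofReal s0) ≠ 0 := by
    simp [ENNReal.ofReal_eq_zero]; linarith
  have hptop : (ENNReal.ofReal s0) ≠ ⊤ := ENNReal.ofReal_ne_top
  rw [eLpNorm_eq_lintegral_rpow_enorm_toReal hp0 hptop,
    ENNReal.toReal_ofReal hs0'.le]
  rw [ENNReal.rpow_eq_top_iff_of_pos (by positivity)]
  rw [eq_top_iff, ← hI]
  calc ∫⁻ z in Ioo (4:ℝ) 5, ENNReal.ofReal (c ^ s0 * (z - 4) ^ (-q))
      ≤ ∫⁻ z in Ioo (4:ℝ) 5, (‖f z‖₊ : ℝ≥0∞) ^ s0 := by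
        apply lintegral_mono_ae
        filter_upwards [ae_restrict_mem measurableSet_Ioo] with z hz
        exact hpt z hz
    _ ≤ ∫⁻ z, (‖f z‖₊ : ℝ≥0∞) ^ s0 := setLIntegral_le_lintegral _ _
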